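/- Let Ĥ be a weakly balanced bipartite signed graph with a special min ordering. Then there do not exist a walk a_0, b_0, a_1, b_1, …, a_k, b_k, c in H all of whose edges a_0b_0, b_0a_1, a_1b_1, …, b_kc are blue, together with a bicoloured edge de, such that a_0 < d < c (in part A) and b_0 < e (in part B). -/

import Mathlib

variable {A B : Type*}

/-- A min ordering of a bipartite graph: a pair of linear (strict total) orders on the
two parts such that if `ab`, `a'b'` are edges with `a <_A a'` and `b' <_B b`, then `ab'`
is an edge. -/
def IsMinOrdering (E : A → B → Prop) (ltA : A → A → Prop) (ltB : B → B → Prop) : Prop :=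
  IsStrictTotalOrder A ltA ∧ IsStrictTotalOrder B ltB ∧
    ∀ a a' b b', E a b → E a' b' → ltA a a' → ltB b' b → E a b'

/-- A special min ordering of a weakly balanced bipartite signed graph: a min ordering
such that at each vertex all bicoloured neighbours precede all blue neighbours. -/
def IsSpecialMinOrdering (E bic : A → B → Prop)
    (ltA : A → A → Prop) (ltB : B → B → Prop) : Prop :=
  IsMinOrdering E ltA ltB ∧
    (∀ (a : A) (b b' : B), bic a b → E a b' → ¬ bic a b' → ltB b b') ∧
    (∀ (b : B) (a a' : A), bic a b → E a' b → ¬ bic a' b → ltA a a')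

/-- in a weakly balanced bipartite signed graph with a special min
ordering there does not exist a walk `a_0, b_0, a_1, b_1, …, a_k, b_k, c` all of whose
edges `a_0b_0, b_0a_1, a_1b_1, …, a_kb_k, b_kc` are blue, together with a bicoloured
edge `de` such that `a_0 < d < c` (in `A`) and `b_0 < e` (in `B`). -/
theorem statement11 [Fintype A] [Fintype B] (E bic : A → B → Prop)
    (hbic : ∀ a b, bic a b → E a b)
    (ltA : A → A → Prop) (ltB : B → B → Prop)
    (hspecial : IsSpecialMinOrdering E bic ltA ltB) :
    ¬ ∃ (k : ℕ) (a : ℕ → A) (b : ℕ → B) (c d : A) (e : B),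
        (∀ i ≤ k, E (a i) (b i) ∧ ¬ bic (a i) (b i)) ∧
        (∀ i < k, E (a (i + 1)) (b i) ∧ ¬ bic (a (i + 1)) (b i)) ∧
        (E c (b k) ∧ ¬ bic c (b k)) ∧
        bic d e ∧
        ltA (a 0) d ∧ ltA d c ∧ ltB (b 0) e := by
  obtain ⟨⟨hA, hB, hmin⟩, hsA, hsB⟩ := hspecial
  rintro ⟨k, a, b, c, d, e, h1, h2, h3, h4, h5, h6, h7⟩
  induction k generalizing a b with
  | zero =>
    have hdb0 : E d (b 0) := hmin d c e (b 0) (hbic d e h4) h3.1 h6 h7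
    by_cases hb : bic d (b 0)
    · exact hA.irrefl d
        (hA.trans _ _ _ (hsB (b 0) d (a 0) hb (h1 0 le_rfl).1 (h1 0 le_rfl).2) h5)
    · exact hB.irrefl e (hB.trans _ _ _ (hsA d e (b 0) h4 hdb0 hb) h7)
  | succ k ih =>
    have h10 := h1 0 (Nat.zero_le _)
    have h11 := h2 0 (Nat.succ_pos _)
    have h1' := h1 1 (Nat.succ_le_succ (Nat.zero_le k))
    have had : ltA (a 1) d := by
      rcases (show ltA (a 1) d ∨ a 1 = d ∨ ltA d (a 1) by have := hA.trichotomous (a 1) d; tauto) with h | h | h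
      · exact h
      · subst h
        exact (hB.irrefl e (hB.trans _ _ _ (hsA (a 1) e (b 0) h4 h11.1 h11.2) h7)).elim
      · have hdb0 : E d (b 0) := hmin d (a 1) e (b 0) (hbic d e h4) h11.1 h h7
        by_cases hb : bic d (b 0)
        · exact absurd (hsB (b 0) d (a 0) hb h10.1 h10.2)
            (fun hh => hA.irrefl d (hA.trans _ _ _ hh h5))
        · exact absurd (hsA d e (b 0) h4 hdb0 hb)
            (fun hh => hB.irrefl e (hB.trans _ _ _ hh h7))
    have hbe : ltB (b 1) e := by
      rcases (show ltB (b 1) e ∨ b 1 = e ∨ ltB e (b 1) by have := hB.trichotomous (b 1) e; tauto) with h | h | h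
      · exact h
      · exact absurd (hsB (b 1) d (a 1) (h ▸ h4) h1'.1 h1'.2)
          (fun hh => hA.irrefl d (hA.trans _ _ _ hh had))
      · have ha1e : E (a 1) e := hmin (a 1) d (b 1) e h1'.1 (hbic d e h4) had h
        by_cases hb : bic (a 1) e
        · exact absurd (hsA (a 1) e (b 0) hb h11.1 h11.2)
            (fun hh => hB.irrefl e (hB.trans _ _ _ hh h7))
        · exact absurd (hsB e d (a 1) h4 ha1e hb)
            (fun hh => hA.irrefl d (hA.trans _ _ _ hh had))
    exact ih (fun i => a (i + 1)) (fun i => b (i + 1))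
      (fun i hi => h1 (i + 1) (Nat.succ_le_succ hi))
      (fun i hi => h2 (i + 1) (Nat.succ_lt_succ hi))
      h3 had hbe
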